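/- A nonzero non-negative sin^k-concave function f on [0,τ] (with τ > 0) attaining its maximum at 0 satisfies τ ≤ π/2, and for all ε ≤ π/2: (∫_0^{min{ε,τ}} f(t)dt) / (∫_0^τ f(t)dt) ≥ (∫_0^ε cos^k(t)dt) / (∫_0^{π/2} cos^k(t)dt). -/

import Mathlib

open Real

/-- `f` is `sin^k`-concave on `I`. -/
def SinPowConcaveOn (k : ℕ) (I : Set ℝ) (f : ℝ → ℝ) : Prop :=
  ∀ x₁ ∈ I, ∀ x₂ ∈ I, ∀ α ∈ Set.Ioo (0 : ℝ) 1,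
    f (α * x₁ + (1 - α) * x₂) ^ ((k : ℝ)⁻¹) ≥
      (Real.sin (α * |x₂ - x₁|) / Real.sin |x₂ - x₁|) * f x₁ ^ ((k : ℝ)⁻¹) +
      (Real.sin ((1 - α) * |x₂ - x₁|) / Real.sin |x₂ - x₁|) * f x₂ ^ ((k : ℝ)⁻¹)

lemma aux_chord (k : ℕ) (τ : ℝ) (hτ : 0 < τ) (hτπ : τ < Real.pi) (f : ℝ → ℝ)
    (hconc : SinPowConcaveOn k (Set.Icc 0 τ) f) {t s : ℝ} (ht0 : 0 < t) (htτ : t ≤ τ)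
    (hs0 : 0 < s) (hst : s < t) :
    Real.sin (t - s) * f 0 ^ ((k:ℝ)⁻¹) + Real.sin s * f t ^ ((k:ℝ)⁻¹) ≤
      Real.sin t * f s ^ ((k:ℝ)⁻¹) := by
  have ht' : t < Real.pi := lt_of_le_of_lt htτ hτπ
  have hsint : 0 < Real.sin t := Real.sin_pos_of_pos_of_lt_pi ht0 ht'
  have h0m : (0:ℝ) ∈ Set.Icc (0:ℝ) τ := ⟨le_refl 0, hτ.le⟩
  have htm : t ∈ Set.Icc (0:ℝ) τ := ⟨ht0.le, htτ⟩
  have hαm : (t - s)/t ∈ Set.Ioo (0:ℝ) 1 :=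
    ⟨div_pos (by linarith) ht0, (div_lt_one ht0).mpr (by linarith)⟩
  have h := hconc 0 h0m t htm _ hαm
  have e1 : (t - s)/t * 0 + (1 - (t - s)/t) * t = s := by field_simp; ring
  have e2 : |t - (0:ℝ)| = t := by rw [sub_zero, abs_of_pos ht0]
  rw [e1, e2] at h
  have e3 : (t - s)/t * t = t - s := by field_simp
  have e4 : (1 - (t - s)/t) * t = s := by field_simp; ring
  rw [e3, e4] at h
  rw [ge_iff_le, div_mul_eq_mul_div, div_mul_eq_mul_div, ← add_div,
    div_le_iff₀ hsint] at h
  linarith [h]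

lemma aux_half (k : ℕ) (hk : 0 < k) (τ : ℝ) (hτ : 0 < τ) (hτπ : τ < Real.pi) (f : ℝ → ℝ)
    (hpos : ∀ x ∈ Set.Icc 0 τ, 0 ≤ f x) (hf0 : 0 < f 0)
    (hconc : SinPowConcaveOn k (Set.Icc 0 τ) f)
    (hmax : ∀ x ∈ Set.Icc 0 τ, f x ≤ f 0) : τ ≤ Real.pi / 2 := by
  by_contra hlt
  push_neg at hlt
  set s := τ - Real.pi / 2 with hs
  have hπ := Real.pi_pos
  have hs0 : 0 < s := by simp [hs]; linarith
  have hst : s < τ := by simp [hs]; linarith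
  have h := aux_chord k τ hτ hτπ f hconc hτ le_rfl hs0 hst
  have e : τ - s = Real.pi / 2 := by simp [hs]
  rw [e, Real.sin_pi_div_two] at h
  have hg0 : 0 < f 0 ^ ((k:ℝ)⁻¹) := Real.rpow_pos_of_pos hf0 _
  have hgτ : 0 ≤ f τ ^ ((k:ℝ)⁻¹) := Real.rpow_nonneg (hpos τ ⟨hτ.le, le_rfl⟩) _
  have hgs : f s ^ ((k:ℝ)⁻¹) ≤ f 0 ^ ((k:ℝ)⁻¹) :=
    Real.rpow_le_rpow (hpos s ⟨hs0.le, hst.le⟩) (hmax s ⟨hs0.le, hst.le⟩) (by positivity)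
  have hsins : 0 ≤ Real.sin s := Real.sin_nonneg_of_nonneg_of_le_pi hs0.le (by linarith)
  have hsinτlt : Real.sin τ < 1 := by
    rw [← Real.sin_pi_sub]
    calc Real.sin (Real.pi - τ) < Real.sin (Real.pi/2) := by
          apply Real.strictMonoOn_sin ⟨by linarith, by linarith⟩ ⟨by linarith, le_rfl⟩
          linarith
      _ = 1 := Real.sin_pi_div_two
  nlinarith [mul_nonneg hsins hgτ, mul_lt_mul_of_pos_right hsinτlt hg0,
    mul_le_mul_of_nonneg_left hgs (Real.sin_nonneg_of_nonneg_of_le_pi hτ.le hτπ.le)]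

lemma aux_C (k : ℕ) (hk : 0 < k) (τ : ℝ) (hτ : 0 < τ) (hτπ : τ < Real.pi) (f : ℝ → ℝ)
    (hpos : ∀ x ∈ Set.Icc 0 τ, 0 ≤ f x) (hf0 : 0 < f 0)
    (hconc : SinPowConcaveOn k (Set.Icc 0 τ) f)
    (hmax : ∀ x ∈ Set.Icc 0 τ, f x ≤ f 0) :
    ∀ t ∈ Set.Icc 0 τ, f t ^ ((k:ℝ)⁻¹) ≤ f 0 ^ ((k:ℝ)⁻¹) * Real.cos t := by
  rintro t ⟨ht0, htτ⟩
  rcases ht0.eq_or_lt with rfl | ht0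
  · simp
  by_contra hgt
  push_neg at hgt
  obtain ⟨g0, hg0def⟩ : ∃ g0 : ℝ, g0 = f 0 ^ ((k:ℝ)⁻¹) := ⟨_, rfl⟩
  obtain ⟨gt, hgtdef⟩ : ∃ gt : ℝ, gt = f t ^ ((k:ℝ)⁻¹) := ⟨_, rfl⟩
  rw [← hg0def, ← hgtdef] at hgt
  have hg0 : 0 < g0 := hg0def ▸ Real.rpow_pos_of_pos hf0 _
  obtain ⟨δ, hδdef⟩ : ∃ δ : ℝ, δ = gt - g0 * Real.cos t := ⟨_, rfl⟩
  have hδ : 0 < δ := by rw [hδdef]; linarith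
  have hsint : 0 < Real.sin t :=
    Real.sin_pos_of_pos_of_lt_pi ht0 (lt_of_le_of_lt htτ hτπ)
  obtain ⟨s, hsdef⟩ : ∃ s : ℝ, s = min (t/2) (min (δ/(2*g0*Real.sin t)) 1) := ⟨_, rfl⟩
  have hs0 : 0 < s := by
    rw [hsdef]; exact lt_min (by linarith) (lt_min (by positivity) one_pos)
  have hst : s < t := by
    rw [hsdef]; exact lt_of_le_of_lt (min_le_left _ _) (by linarith)
  have hs1 : s ≤ 1 := by
    rw [hsdef]; exact le_trans (min_le_right _ _) (min_le_right _ _)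
  have hsδ : s ≤ δ/(2*g0*Real.sin t) := by
    rw [hsdef]; exact le_trans (min_le_right _ _) (min_le_left _ _)
  have hchord := aux_chord k τ hτ hτπ f hconc ht0 htτ hs0 hst
  rw [← hg0def, ← hgtdef] at hchord
  have hgs : f s ^ ((k:ℝ)⁻¹) ≤ g0 := by
    rw [hg0def]
    exact Real.rpow_le_rpow (hpos s ⟨hs0.le, by linarith⟩) (hmax s ⟨hs0.le, by linarith⟩)
      (by positivity)
  -- 1 - cos s ≤ s^2/2
  have hcos2 : Real.cos s = 2 * Real.cos (s/2) ^ 2 - 1 := by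
    have := Real.cos_two_mul (s/2)
    rw [show 2 * (s/2) = s by ring] at this
    exact this
  have hsinhalf : 0 ≤ Real.sin (s/2) := Real.sin_nonneg_of_nonneg_of_le_pi (by linarith)
    (by nlinarith [Real.pi_gt_three])
  have hsinhalfle : Real.sin (s/2) ≤ s/2 := Real.sin_le (by linarith)
  have hsq := Real.sin_sq_add_cos_sq (s/2)
  have honesub : 1 - Real.cos s ≤ s^2/2 := by nlinarith
  -- sin s ≥ s/2
  have hsins : s/2 ≤ Real.sin s := by
    have := Real.sin_gt_sub_cube hs0
    nlinarith [pow_le_pow_left₀ hs0.le hs1 3]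
  -- key numeric inequality
  have hkey : g0 * Real.sin t * (1 - Real.cos s) < Real.sin s * δ := by
    have h1 : g0 * Real.sin t * s ≤ δ/2 := by
      rw [le_div_iff₀ (by positivity : (0:ℝ) < 2*g0*Real.sin t)] at hsδ
      linarith [hsδ]
    calc g0 * Real.sin t * (1 - Real.cos s) ≤ g0 * Real.sin t * (s^2/2) := by
          apply mul_le_mul_of_nonneg_left honesub (by positivity)
      _ = (g0 * Real.sin t * s) * (s/2) := by ring
      _ ≤ (δ/2) * (s/2) := mul_le_mul_of_nonneg_right h1 (by linarith)
      _ < (s/2) * δ := by nlinarith [mul_pos hs0 hδ]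
      _ ≤ Real.sin s * δ := mul_le_mul_of_nonneg_right hsins hδ.le
  rw [Real.sin_sub t s] at hchord
  have h3 : Real.sin t * f s ^ ((k:ℝ)⁻¹) ≤ Real.sin t * g0 :=
    mul_le_mul_of_nonneg_left hgs hsint.le
  rw [hδdef] at hkey
  linarith [hchord, hkey, h3]

lemma aux_B (k : ℕ) (hk : 0 < k) (τ : ℝ) (hτ : 0 < τ) (hτπ : τ < Real.pi)
    (hτ2 : τ ≤ Real.pi/2) (f : ℝ → ℝ)
    (hpos : ∀ x ∈ Set.Icc 0 τ, 0 ≤ f x) (hf0 : 0 < f 0)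
    (hconc : SinPowConcaveOn k (Set.Icc 0 τ) f)
    (hmax : ∀ x ∈ Set.Icc 0 τ, f x ≤ f 0) :
    ∀ s t : ℝ, 0 ≤ s → s ≤ t → t ≤ τ →
      f t * Real.cos s ^ k ≤ f s * Real.cos t ^ k := by
  have hπ := Real.pi_pos
  have hC := aux_C k hk τ hτ hτπ f hpos hf0 hconc hmax
  -- first the g-form
  have hg : ∀ s t : ℝ, 0 ≤ s → s ≤ t → t ≤ τ →
      f t ^ ((k:ℝ)⁻¹) * Real.cos s ≤ f s ^ ((k:ℝ)⁻¹) * Real.cos t := by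
    intro s t hs0 hst htτ
    rcases hst.eq_or_lt with rfl | hst
    · exact le_rfl
    rcases hs0.eq_or_lt with rfl | hs0
    · simpa using hC t ⟨by linarith, htτ⟩
    have ht0 : 0 < t := lt_trans hs0 hst
    have hsint : 0 < Real.sin t :=
      Real.sin_pos_of_pos_of_lt_pi ht0 (lt_of_le_of_lt htτ hτπ)
    have hcost : 0 ≤ Real.cos t :=
      Real.cos_nonneg_of_mem_Icc ⟨by linarith, by linarith⟩
    have hsints : 0 ≤ Real.sin (t - s) :=
      Real.sin_nonneg_of_nonneg_of_le_pi (by linarith) (by linarith)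
    have hchord := aux_chord k τ hτ hτπ f hconc ht0 htτ hs0 hst
    have h1 := mul_le_mul_of_nonneg_right hchord hcost
    have h2 : 0 ≤ Real.sin (t - s) * (f 0 ^ ((k:ℝ)⁻¹) * Real.cos t - f t ^ ((k:ℝ)⁻¹)) :=
      mul_nonneg hsints (by linarith [hC t ⟨ht0.le, htτ⟩])
    rw [Real.sin_sub t s] at h1 h2
    have h4 : Real.sin t * (f t ^ ((k:ℝ)⁻¹) * Real.cos s) ≤
        Real.sin t * (f s ^ ((k:ℝ)⁻¹) * Real.cos t) := by linarith [h1, h2]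
    exact le_of_mul_le_mul_left h4 hsint
  intro s t hs0 hst htτ
  have hgst := hg s t hs0 hst htτ
  have h1 : 0 ≤ f t ^ ((k:ℝ)⁻¹) * Real.cos s :=
    mul_nonneg (Real.rpow_nonneg (hpos t ⟨by linarith, htτ⟩) _)
      (Real.cos_nonneg_of_mem_Icc ⟨by linarith, by linarith⟩)
  have h5 := pow_le_pow_left₀ h1 hgst k
  rw [mul_pow, mul_pow, Real.rpow_inv_natCast_pow (hpos t ⟨by linarith, htτ⟩) hk.ne',
    Real.rpow_inv_natCast_pow (hpos s ⟨hs0, by linarith⟩) hk.ne'] at h5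
  exact h5

lemma aux_pos (k : ℕ) (hk : 0 < k) (τ : ℝ) (hτ : 0 < τ) (hτπ : τ < Real.pi) (f : ℝ → ℝ)
    (hpos : ∀ x ∈ Set.Icc 0 τ, 0 ≤ f x) (hf0 : 0 < f 0)
    (hconc : SinPowConcaveOn k (Set.Icc 0 τ) f) :
    ∀ s : ℝ, 0 < s → s < τ → 0 < f s := by
  intro s hs0 hsτ
  have hchord := aux_chord k τ hτ hτπ f hconc hτ le_rfl hs0 hsτ
  have hsinτs : 0 < Real.sin (τ - s) :=
    Real.sin_pos_of_pos_of_lt_pi (by linarith) (by linarith)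
  have hg0 : 0 < f 0 ^ ((k:ℝ)⁻¹) := Real.rpow_pos_of_pos hf0 _
  have hgτ : 0 ≤ f τ ^ ((k:ℝ)⁻¹) := Real.rpow_nonneg (hpos τ ⟨hτ.le, le_rfl⟩) _
  have hsins : 0 ≤ Real.sin s :=
    Real.sin_nonneg_of_nonneg_of_le_pi hs0.le (by linarith)
  have hsinτ : 0 < Real.sin τ := Real.sin_pos_of_pos_of_lt_pi hτ hτπ
  have hgs : 0 < f s ^ ((k:ℝ)⁻¹) := by
    have h := mul_pos hsinτs hg0
    nlinarith [mul_nonneg hsins hgτ]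
  have := Real.rpow_inv_natCast_pow (hpos s ⟨hs0.le, hsτ.le⟩) hk.ne'
  calc (0:ℝ) < (f s ^ ((k:ℝ)⁻¹)) ^ k := pow_pos hgs k
    _ = f s := this

/-- A nonzero non-negative `sin^k`-concave function on `[0,τ]` attaining its maximum at `0`
satisfies `τ ≤ π/2` and the integral-ratio comparison with `cos^k`. -/
theorem stmt_9 (k : ℕ) (hk : 0 < k) (τ : ℝ) (hτ : 0 < τ) (hτπ : τ < Real.pi)
    (f : ℝ → ℝ) (hpos : ∀ x ∈ Set.Icc 0 τ, 0 ≤ f x)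
    (hne : ∃ x ∈ Set.Icc 0 τ, f x ≠ 0)
    (hconc : SinPowConcaveOn k (Set.Icc 0 τ) f)
    (hmax : ∀ x ∈ Set.Icc 0 τ, f x ≤ f 0) :
    τ ≤ Real.pi / 2 ∧
      ∀ ε : ℝ, 0 ≤ ε → ε ≤ Real.pi / 2 →
        (∫ t in (0 : ℝ)..(min ε τ), f t) / (∫ t in (0 : ℝ)..τ, f t) ≥
          (∫ t in (0 : ℝ)..ε, Real.cos t ^ k) / (∫ t in (0 : ℝ)..(Real.pi / 2), Real.cos t ^ k) := by
  have hπ := Real.pi_pos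
  have hf0 : 0 < f 0 := by
    obtain ⟨x₀, hx₀, hfx₀⟩ := hne
    rcases (hpos x₀ hx₀).lt_or_eq with h | h
    · exact lt_of_lt_of_le h (hmax x₀ hx₀)
    · exact absurd h.symm hfx₀
  have hτ2 : τ ≤ Real.pi/2 := aux_half k hk τ hτ hτπ f hpos hf0 hconc hmax
  have hB := aux_B k hk τ hτ hτπ hτ2 f hpos hf0 hconc hmax
  have hfpos := aux_pos k hk τ hτ hτπ f hpos hf0 hconc
  have hfzero : ∀ t ∈ Set.Icc (0:ℝ) τ, Real.cos t = 0 → f t = 0 := by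
    intro t ht hct
    have h := aux_C k hk τ hτ hτπ f hpos hf0 hconc hmax t ht
    rw [hct, mul_zero] at h
    have h0 : 0 ≤ f t ^ ((k:ℝ)⁻¹) := Real.rpow_nonneg (hpos t ht) _
    have he : f t ^ ((k:ℝ)⁻¹) = 0 := le_antisymm h h0
    have hp := Real.rpow_inv_natCast_pow (hpos t ht) hk.ne'
    rw [he, zero_pow hk.ne'] at hp
    exact hp.symm
  refine ⟨hτ2, ?_⟩
  intro ε hε0 hεπ
  set F : ℝ → ℝ := fun t => if t < 0 then f 0 else if t ≤ τ then f t / Real.cos t ^ k else 0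
    with hF
  set G : ℝ → ℝ := fun t => F t * Real.cos t ^ k with hG
  have hcospow_pos : ∀ t : ℝ, 0 ≤ t → t < Real.pi/2 → 0 < Real.cos t ^ k := fun t h1 h2 =>
    pow_pos (Real.cos_pos_of_mem_Ioo ⟨by linarith, h2⟩) k
  have hcos_nn : ∀ t : ℝ, 0 ≤ t → t ≤ Real.pi/2 → (0:ℝ) ≤ Real.cos t ^ k := fun t h1 h2 =>
    pow_nonneg (Real.cos_nonneg_of_mem_Icc ⟨by linarith, h2⟩) k
  have hFanti : Antitone F := by
    intro a b hab
    simp only [hF]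
    by_cases hb0 : b < 0
    · rw [if_pos (lt_of_le_of_lt hab hb0), if_pos hb0]
    push_neg at hb0
    rw [if_neg (not_lt.mpr hb0)]
    by_cases ha0 : a < 0
    · rw [if_pos ha0]
      by_cases hbτ : b ≤ τ
      · rw [if_pos hbτ]
        by_cases hbhalf : b < Real.pi/2
        · rw [div_le_iff₀ (hcospow_pos b hb0 hbhalf)]
          have h := hB 0 b le_rfl hb0 hbτ
          simpa using h
        · have hb : b = Real.pi/2 := le_antisymm (hbτ.trans hτ2) (not_lt.mp hbhalf)
          rw [hb, Real.cos_pi_div_two, zero_pow hk.ne', div_zero]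
          exact hf0.le
      · rw [if_neg hbτ]; exact hf0.le
    push_neg at ha0
    rw [if_neg (not_lt.mpr ha0)]
    by_cases hbτ : b ≤ τ
    · have haτ : a ≤ τ := le_trans hab hbτ
      rw [if_pos hbτ, if_pos haτ]
      by_cases hbhalf : b < Real.pi/2
      · have hahalf : a < Real.pi/2 := lt_of_le_of_lt hab hbhalf
        rw [div_le_div_iff₀ (hcospow_pos b hb0 hbhalf) (hcospow_pos a ha0 hahalf)]
        exact hB a b ha0 hab hbτ
      · have hb : b = Real.pi/2 := le_antisymm (hbτ.trans hτ2) (not_lt.mp hbhalf)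
        rw [hb, Real.cos_pi_div_two, zero_pow hk.ne', div_zero]
        exact div_nonneg (hpos a ⟨ha0, haτ⟩) (hcos_nn a ha0 (haτ.trans hτ2))
    · rw [if_neg hbτ]
      by_cases haτ : a ≤ τ
      · rw [if_pos haτ]
        exact div_nonneg (hpos a ⟨ha0, haτ⟩) (hcos_nn a ha0 (haτ.trans hτ2))
      · rw [if_neg haτ]
  have hFnonneg : ∀ t, 0 ≤ F t := by
    intro t
    simp only [hF]
    split_ifs with h1 h2
    · exact hf0.le
    · exact div_nonneg (hpos t ⟨not_lt.mp h1, h2⟩)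
        (hcos_nn t (not_lt.mp h1) (h2.trans hτ2))
    · exact le_rfl
  have hF0 : F 0 = f 0 := by simp [hF, hτ.le]
  have hFle : ∀ t, F t ≤ f 0 := by
    intro t
    rcases lt_or_ge t 0 with h | h
    · simp [hF, h]
    · rw [← hF0]; exact hFanti h
  have hGmeas : Measurable G := by
    rw [hG]
    exact hFanti.measurable.mul ((Real.continuous_cos.pow k).measurable)
  have hGint : ∀ a b : ℝ, IntervalIntegrable G MeasureTheory.volume a b := by
    intro a b
    apply IntervalIntegrable.mono_fun' (g := fun _ => f 0)
      intervalIntegrable_const hGmeas.aestronglyMeasurable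
    apply Filter.Eventually.of_forall
    intro t
    have h1 : ‖G t‖ = F t * |Real.cos t ^ k| := by
      rw [hG]; simp [Real.norm_eq_abs, abs_mul, abs_of_nonneg (hFnonneg t)]
    show ‖G t‖ ≤ f 0
    rw [h1]
    have h2 : |Real.cos t ^ k| ≤ 1 := by
      rw [abs_pow]
      exact pow_le_one₀ (abs_nonneg _) (Real.abs_cos_le_one t)
    calc F t * |Real.cos t ^ k| ≤ f 0 * 1 :=
          mul_le_mul (hFle t) h2 (abs_nonneg _) hf0.le
      _ = f 0 := mul_one _
  have hGC : Set.EqOn f G (Set.Icc 0 τ) := by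
    intro t ht
    simp only [hG, hF]
    rw [if_neg (not_lt.mpr ht.1), if_pos ht.2]
    by_cases hc : Real.cos t ^ k = 0
    · rw [hc, mul_zero]
      exact hfzero t ht (pow_eq_zero_iff hk.ne' |>.mp hc)
    · rw [div_mul_cancel₀ _ hc]
  have hCcont : Continuous fun t : ℝ => Real.cos t ^ k := Real.continuous_cos.pow k
  have hCint : ∀ a b : ℝ, IntervalIntegrable (fun t => Real.cos t ^ k)
      MeasureTheory.volume a b := fun a b => hCcont.intervalIntegrable a b
  have hGzero : ∀ b : ℝ, τ ≤ b → ∫ t in τ..b, G t = 0 := by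
    intro b hb
    rw [intervalIntegral.integral_of_le hb]
    rw [MeasureTheory.setIntegral_congr_fun measurableSet_Ioc
      (g := fun _ => (0:ℝ)) ?_]
    · simp
    · intro t ht
      simp only [hG, hF]
      rw [if_neg (not_lt.mpr (le_trans hτ.le ht.1.le)), if_neg (not_le.mpr ht.1), zero_mul]
  have hfG : ∀ x : ℝ, 0 ≤ x → x ≤ τ → ∫ t in (0:ℝ)..x, f t = ∫ t in (0:ℝ)..x, G t := by
    intro x hx0 hxτ
    apply intervalIntegral.integral_congr
    rw [Set.uIcc_of_le hx0]
    exact hGC.mono (Set.Icc_subset_Icc le_rfl hxτ)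
  -- numerator
  have hm0 : 0 ≤ min ε τ := le_min hε0 hτ.le
  have hmτ : min ε τ ≤ τ := min_le_right _ _
  have hnum : ∫ t in (0:ℝ)..(min ε τ), f t = ∫ t in (0:ℝ)..ε, G t := by
    rw [hfG _ hm0 hmτ]
    rcases le_total ε τ with h | h
    · rw [min_eq_left h]
    · rw [min_eq_right h]
      rw [← intervalIntegral.integral_add_adjacent_intervals (hGint 0 τ) (hGint τ ε),
        hGzero ε h, add_zero]
  -- denominator for f
  have hden : ∫ t in (0:ℝ)..τ, f t = ∫ t in (0:ℝ)..(Real.pi/2), G t := by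
    rw [hfG τ hτ.le le_rfl,
      ← intervalIntegral.integral_add_adjacent_intervals (hGint 0 τ) (hGint τ (Real.pi/2)),
      hGzero _ hτ2, add_zero]
  -- splits at ε
  have hsplitG : ∫ t in (0:ℝ)..(Real.pi/2), G t =
      (∫ t in (0:ℝ)..ε, G t) + ∫ t in ε..(Real.pi/2), G t :=
    (intervalIntegral.integral_add_adjacent_intervals (hGint 0 ε) (hGint ε _)).symm
  have hsplitC : ∫ t in (0:ℝ)..(Real.pi/2), Real.cos t ^ k =
      (∫ t in (0:ℝ)..ε, Real.cos t ^ k) + ∫ t in ε..(Real.pi/2), Real.cos t ^ k :=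
    (intervalIntegral.integral_add_adjacent_intervals (hCint 0 ε) (hCint ε _)).symm
  -- positivity
  have hDpos : 0 < ∫ t in (0:ℝ)..(Real.pi/2), G t := by
    rw [← hden, hfG τ hτ.le le_rfl]
    apply intervalIntegral.intervalIntegral_pos_of_pos_on (hGint 0 τ) _ hτ
    intro x hx
    have : G x = f x := (hGC ⟨hx.1.le, hx.2.le⟩).symm
    rw [this]
    exact hfpos x hx.1 hx.2
  have hCpos : 0 < ∫ t in (0:ℝ)..(Real.pi/2), Real.cos t ^ k := by
    apply intervalIntegral.intervalIntegral_pos_of_pos_on (hCint 0 _) _ (by linarith)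
    intro x hx
    exact hcospow_pos x hx.1.le hx.2
  -- comparison lemmas
  have hA1 : F ε * ∫ t in (0:ℝ)..ε, Real.cos t ^ k ≤ ∫ t in (0:ℝ)..ε, G t := by
    rw [← intervalIntegral.integral_const_mul]
    apply intervalIntegral.integral_mono_on hε0
      ((continuous_const.mul hCcont).intervalIntegrable 0 ε) (hGint 0 ε)
    intro x hx
    simp only [hG]
    exact mul_le_mul_of_nonneg_right (hFanti hx.2)
      (hcos_nn x hx.1 (hx.2.trans hεπ))
  have hA2 : ∫ t in ε..(Real.pi/2), G t ≤ F ε * ∫ t in ε..(Real.pi/2), Real.cos t ^ k := by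
    rw [← intervalIntegral.integral_const_mul]
    apply intervalIntegral.integral_mono_on hεπ (hGint ε _)
      ((continuous_const.mul hCcont).intervalIntegrable ε _)
    intro x hx
    simp only [hG]
    exact mul_le_mul_of_nonneg_right (hFanti hx.1)
      (hcos_nn x (le_trans hε0 hx.1) hx.2)
  have hB1nn : 0 ≤ ∫ t in (0:ℝ)..ε, Real.cos t ^ k :=
    intervalIntegral.integral_nonneg hε0 (fun u hu => hcos_nn u hu.1 (hu.2.trans hεπ))
  have hB2nn : 0 ≤ ∫ t in ε..(Real.pi/2), Real.cos t ^ k :=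
    intervalIntegral.integral_nonneg hεπ (fun u hu => hcos_nn u (le_trans hε0 hu.1) hu.2)
  have hA1nn : 0 ≤ ∫ t in (0:ℝ)..ε, G t :=
    intervalIntegral.integral_nonneg hε0 (fun u hu => by
      simp only [hG]
      exact mul_nonneg (hFnonneg u) (hcos_nn u hu.1 (hu.2.trans hεπ)))
  -- conclude
  rw [hnum, hden, ge_iff_le, div_le_div_iff₀ hCpos hDpos, hsplitG, hsplitC]
  have hkey : (∫ t in (0:ℝ)..ε, Real.cos t ^ k) * ∫ t in ε..(Real.pi/2), G t ≤
      (∫ t in (0:ℝ)..ε, G t) * ∫ t in ε..(Real.pi/2), Real.cos t ^ k := by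
    calc (∫ t in (0:ℝ)..ε, Real.cos t ^ k) * ∫ t in ε..(Real.pi/2), G t
        ≤ (∫ t in (0:ℝ)..ε, Real.cos t ^ k) *
            (F ε * ∫ t in ε..(Real.pi/2), Real.cos t ^ k) :=
          mul_le_mul_of_nonneg_left hA2 hB1nn
      _ = (F ε * ∫ t in (0:ℝ)..ε, Real.cos t ^ k) * ∫ t in ε..(Real.pi/2), Real.cos t ^ k := by
          ring
      _ ≤ (∫ t in (0:ℝ)..ε, G t) * ∫ t in ε..(Real.pi/2), Real.cos t ^ k :=
          mul_le_mul_of_nonneg_right hA1 hB2nn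
  nlinarith [hkey, hA1nn, hB1nn]
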